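/- Let X be a compact metric space and g : X → X a continuous map. Suppose there exists m ∈ ℕ such that X contains a gᵐ-divergent sequence, i.e. a sequence (xₙ)ₙ≥0 of points of X such that (1) the limit x = limₙ→∞ xₙ exists, (2) gᵐ(xₙ₊₁) = xₙ for every n, and (3) there is an open neighbourhood U of x with U ∩ {(gᵐ)ⁿ(x₀) : n ∈ ℕ} = ∅. Then for every nonprincipal ultrafilter u on ℕ, the u-limit function gᵘ : X → X is discontinuous. -/

import Mathlib

open Set Filter Metric

/-- The family of iterates of `f` is equicontinuous at `x`. -/
def IterEquicontinuousAt {X : Type*} [MetricSpace X] (f : X → X) (x : X) : Prop :=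
  ∀ ε : ℝ, 0 < ε → ∃ δ : ℝ, 0 < δ ∧ ∀ y : X, dist x y < δ →
    ∀ n : ℕ, dist (f^[n] x) (f^[n] y) ≤ ε

/-- The family of iterates of `f` is equicontinuous (at every point). -/
def IterEquicontinuous {X : Type*} [MetricSpace X] (f : X → X) : Prop :=
  ∀ x : X, IterEquicontinuousAt f x

/-- A subset of a topological space is an arc if it is homeomorphic to `[0,1]`. -/
def IsArc {X : Type*} [TopologicalSpace X] (A : Set X) : Prop :=
  Nonempty (A ≃ₜ unitInterval)

/-- A dendrite: a compact, connected, locally connected metric space containing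
no subspace homeomorphic to the unit circle. -/
def IsDendrite (X : Type*) [MetricSpace X] : Prop :=
  CompactSpace X ∧ ConnectedSpace X ∧ LocallyConnectedSpace X ∧
    ∀ S : Set X, ¬ Nonempty (S ≃ₜ (Metric.sphere (0 : ℂ) 1))

/-- `x` is a branching point: `X \ {x}` has at least three connected components. -/
def IsBranchingPoint {X : Type*} [TopologicalSpace X] (x : X) : Prop :=
  ∃ c₁ c₂ c₃ : ConnectedComponents ↥({x}ᶜ : Set X), c₁ ≠ c₂ ∧ c₁ ≠ c₃ ∧ c₂ ≠ c₃

/-- `x` has finite order: `X \ {x}` has finitely many connected components. -/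
def HasFiniteOrder {X : Type*} [TopologicalSpace X] (x : X) : Prop :=
  Finite (ConnectedComponents ↥({x}ᶜ : Set X))

/-- A finite tree: a dendrite with finitely many branching points, each of finite order. -/
def IsFiniteTree (X : Type*) [MetricSpace X] : Prop :=
  IsDendrite X ∧ {x : X | IsBranchingPoint x}.Finite ∧
    ∀ x : X, IsBranchingPoint x → HasFiniteOrder x

/-- `A` is an `f`-expanding arc: an arc with `A ⊊ fⁿ[A]` for some `n ≥ 1`. -/
def IsExpandingArc {X : Type*} [TopologicalSpace X] (f : X → X) (A : Set X) : Prop :=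
  IsArc A ∧ ∃ n : ℕ, 0 < n ∧ A ⊂ f^[n] '' A

/-- The set of fixed points of `fⁿ`. -/
def fixSet {X : Type*} (f : X → X) (n : ℕ) : Set X := {x | f^[n] x = x}

/-- The set of periodic points of `f`. -/
def perSet {X : Type*} (f : X → X) : Set X := {x | ∃ n : ℕ, 0 < n ∧ f^[n] x = x}

/-- The intersection `⋂_{m ≥ 1} fᵐ[X]` of the images of all the iterates of `f`. -/
def coreSet {X : Type*} (f : X → X) : Set X := ⋂ m : ℕ, f^[m + 1] '' Set.univ

/-- In a dendrite, `y` belongs to the (unique) arc joining `a` and `b` iff every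
connected subset containing `a` and `b` contains `y`. -/
def InArc {X : Type*} [TopologicalSpace X] (a b y : X) : Prop :=
  ∀ C : Set X, IsPreconnected C → a ∈ C → b ∈ C → y ∈ C

/-- An ultrafilter on ℕ is nonprincipal if it is not of the form `{A | n ∈ A}`. -/
def IsNonprincipal (u : Ultrafilter ℕ) : Prop := ∀ n : ℕ, u ≠ pure n

/-- `fu` is the `u`-limit function of `f`: `fu x = u-lim_n fⁿ(x)`. -/
def IsULimitFun {X : Type*} [MetricSpace X] (u : Ultrafilter ℕ) (f fu : X → X) : Prop :=
  ∀ x : X, ∀ ε : ℝ, 0 < ε → {n : ℕ | dist (f^[n] x) (fu x) < ε} ∈ u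

/-- A `g`-divergent sequence. -/
def IsDivergentSeq {X : Type*} [MetricSpace X] (g : X → X) (x : ℕ → X) : Prop :=
  (∃ L : X, Filter.Tendsto x Filter.atTop (nhds L) ∧
     ∃ U : Set X, IsOpen U ∧ L ∈ U ∧ ∀ n : ℕ, 0 < n → g^[n] (x 0) ∉ U) ∧
  ∀ n : ℕ, g (x (n + 1)) = x n

/-- A `g`-backwards sequence in the arc `I`. -/
def IsBackwardSeq {X : Type*} [TopologicalSpace X] (g : X → X) (I : Set X) (x : ℕ → X) : Prop :=
  (∀ n : ℕ, x n ∈ I) ∧ (∀ n : ℕ, InArc (x n) (x (n + 2)) (x (n + 1))) ∧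
    ∀ n : ℕ, g (x (n + 1)) = x n

theorem stmt18 {X : Type*} [MetricSpace X] [CompactSpace X]
    (g : X → X) (hg : Continuous g)
    (hdiv : ∃ m : ℕ, 0 < m ∧ ∃ x : ℕ → X, IsDivergentSeq (g^[m]) x) :
    ∀ (u : Ultrafilter ℕ) (gu : X → X),
      IsNonprincipal u → IsULimitFun u g gu → ¬ Continuous gu := by
  obtain ⟨m, hm, x, ⟨⟨L, hL, U, hUopen, hLU, hUorb⟩, hback⟩⟩ := hdiv
  intro u gu hnp hul hcont
  -- L is a fixed point of g^[m]
  have hfL : g^[m] L = L := by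
    have h1 : Tendsto (fun k => x (k + 1)) atTop (nhds L) :=
      hL.comp (tendsto_add_atTop_nat 1)
    have h2 : Tendsto (fun k => g^[m] (x (k + 1))) atTop (nhds (g^[m] L)) :=
      ((hg.iterate m).tendsto L).comp h1
    have h3 : Tendsto (fun k => g^[m] (x (k + 1))) atTop (nhds L) := by
      simpa only [hback] using hL
    exact tendsto_nhds_unique h2 h3
  have hfixL : ∀ q : ℕ, (g^[m])^[q] L = L := fun q => Function.iterate_fixed hfL q
  -- pulling back to x 0
  have hx0 : ∀ k : ℕ, (g^[m])^[k] (x k) = x 0 := by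
    intro k
    induction k with
    | zero => rfl
    | succ k ih =>
      rw [Function.iterate_succ_apply, hback k, ih]
  -- cofinite sets are in u
  have hcof : ∀ N : ℕ, {n : ℕ | N ≤ n} ∈ u := by
    intro N
    by_contra h
    have hc : {n : ℕ | N ≤ n}ᶜ ∈ u := (Ultrafilter.compl_mem_iff_notMem).2 h
    have hfin : ({n : ℕ | N ≤ n}ᶜ : Set ℕ).Finite := by
      have : ({n : ℕ | N ≤ n}ᶜ : Set ℕ) = {n : ℕ | n < N} := by
        ext n; simp only [Set.mem_compl_iff, Set.mem_setOf_eq, not_le]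
      rw [this]; exact Set.finite_lt_nat N
    obtain ⟨a, _, ha⟩ := Ultrafilter.eq_pure_of_finite_mem hfin hc
    exact hnp a ha
  -- choose the residue class in u
  obtain ⟨r, hr, hru⟩ : ∃ r : ℕ, r < m ∧ {n : ℕ | n % m = r} ∈ u := by
    have hU : (⋃ r ∈ {j : ℕ | j < m}, {n : ℕ | n % m = r}) ∈ u := by
      have : (⋃ r ∈ {j : ℕ | j < m}, {n : ℕ | n % m = r}) = Set.univ := by
        ext n
        simp only [Set.mem_iUnion, Set.mem_setOf_eq, Set.mem_univ, iff_true]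
        exact ⟨n % m, Nat.mod_lt n hm, rfl⟩
      rw [this]; exact Filter.univ_mem
    obtain ⟨r, hr, hru⟩ := (Ultrafilter.finite_biUnion_mem_iff (Set.finite_lt_nat m)).1 hU
    exact ⟨r, hr, hru⟩
  -- g^[n] L = g^[r] L for n ≡ r mod m
  have hnL : ∀ n : ℕ, n % m = r → g^[n] L = g^[r] L := by
    intro n hn
    have hd := Nat.div_add_mod n m
    have : n = r + m * (n / m) := by omega
    rw [this, Function.iterate_add_apply, Function.iterate_mul, hfixL]
  -- gu L = g^[r] L
  have hguL : gu L = g^[r] L := by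
    by_contra hne
    have hd : 0 < dist (g^[r] L) (gu L) := dist_pos.2 fun h => hne h.symm
    obtain ⟨n, hn1, hn2⟩ :=
      Filter.nonempty_of_mem (Filter.inter_mem (hul L _ hd) hru)
    rw [Set.mem_setOf_eq] at hn2
    rw [Set.mem_setOf_eq, hnL n hn2] at hn1
    exact absurd hn1 (lt_irrefl _)
  set s := m - r with hs
  have hsr : s + r = m := by omega
  -- each g^[s] (gu (x k)) is outside U
  have hmem : ∀ k : ℕ, g^[s] (gu (x k)) ∉ U := by
    intro k hin
    obtain ⟨ε, hε, hball⟩ := Metric.isOpen_iff.1 hUopen _ hin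
    obtain ⟨δ, hδ, hδε⟩ := Metric.continuousAt_iff.1 ((hg.iterate s).continuousAt
      (x := gu (x k))) ε hε
    obtain ⟨n, hn⟩ := Filter.nonempty_of_mem
      (Filter.inter_mem (Filter.inter_mem (hul (x k) δ hδ) hru) (hcof ((k + 1) * m)))
    obtain ⟨⟨hn1, hn2⟩, hn3⟩ := hn
    rw [Set.mem_setOf_eq] at hn1 hn2 hn3
    have hdist : dist (g^[s] (g^[n] (x k))) (g^[s] (gu (x k))) < ε := hδε hn1
    have hmemU : g^[s] (g^[n] (x k)) ∈ U := hball (Metric.mem_ball.2 hdist)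
    -- but g^[s] (g^[n] (x k)) is on the forward orbit of x 0, outside U
    set q := n / m + 1 with hq
    have hd := Nat.div_add_mod n m
    have hmq : m * q = m * (n / m) + m := by rw [hq, Nat.mul_add, Nat.mul_one]
    have hsn : s + n = m * q := by omega
    have hqk : k < q := by
      have h1 : k + 1 ≤ n / m := (Nat.le_div_iff_mul_le hm).2 hn3
      omega
    have horb : g^[s] (g^[n] (x k)) = (g^[m])^[q - k] (x 0) := by
      rw [← Function.iterate_add_apply, hsn, Function.iterate_mul]
      have h1 : (g^[m])^[q] (x k) = (g^[m])^[q - k] ((g^[m])^[k] (x k)) := by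
        rw [← Function.iterate_add_apply]
        congr 1
        omega
      rw [h1, hx0]
    rw [horb] at hmemU
    exact hUorb (q - k) (by omega) hmemU
  -- but g^[s] (gu (x k)) → g^[s] (gu L) = L ∈ U, contradiction
  have htend : Tendsto (fun k => g^[s] (gu (x k))) atTop (nhds (g^[s] (gu L))) :=
    (((hg.iterate s).comp hcont).tendsto L).comp hL
  have hgsL : g^[s] (gu L) = L := by
    rw [hguL, ← Function.iterate_add_apply, hsr, hfL]
  have htend' : Tendsto (fun k => g^[s] (gu (x k))) atTop (nhds L) := by
    rwa [hgsL] at htend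
  have hLc : L ∈ Uᶜ :=
    hUopen.isClosed_compl.mem_of_tendsto htend' (Filter.Eventually.of_forall hmem)
  exact hLc hLU
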